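/- Let A be a real N_R × N_S matrix representing a linear operator T between finite dimensional Hilbert spaces S and R with symmetric positive definite inner product matrices M_S and M_R. Let σ̲_j denote the singular values of A (non-increasing) and σ_j the singular values of the operator T with respect to the Hilbert space inner products (non-increasing). Then σ̲_j ≤ sqrt(λ_max(M_S)/λ_min(M_R)) · σ_j for all j up to the rank of T. -/

import Mathlib

open Matrix

/-- The norm on `ℝ^n` induced by a (positive definite) inner product matrix `Mmat`. -/
noncomputable def matNorm {n : ℕ} (Mmat : Matrix (Fin n) (Fin n) ℝ) (x : Fin n → ℝ) : ℝ :=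
  Real.sqrt (x ⬝ᵥ Mmat.mulVec x)

/-- The `j`-th singular value (0-based, non-increasing) of the linear operator with matrix
`A`, with respect to given norms on source and range, characterized via the
Courant minimax principle. -/
noncomputable def minimaxSV {m n : ℕ} (normR : (Fin m → ℝ) → ℝ) (normS : (Fin n → ℝ) → ℝ)
    (A : Matrix (Fin m) (Fin n) ℝ) (j : ℕ) : ℝ :=
  ⨆ W : {W : Submodule ℝ (Fin n → ℝ) // Module.finrank ℝ W = j + 1},
    ⨅ x : {x : Fin n → ℝ // x ∈ W.1 ∧ x ≠ 0}, normR (A.mulVec x.1) / normS x.1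

lemma dp_self_nonneg {n : ℕ} (x : Fin n → ℝ) : 0 ≤ x ⬝ᵥ x :=
  Finset.sum_nonneg fun i _ => mul_self_nonneg _

lemma dp_self_pos {n : ℕ} {x : Fin n → ℝ} (hx : x ≠ 0) : 0 < x ⬝ᵥ x :=
  lt_of_le_of_ne (dp_self_nonneg x) fun h => hx (dotProduct_self_eq_zero.mp h.symm)

lemma quad_upper {n : ℕ} (M : Matrix (Fin n) (Fin n) ℝ) :
    ∃ K : ℝ, 0 ≤ K ∧ ∀ y : Fin n → ℝ, y ⬝ᵥ M.mulVec y ≤ K * (y ⬝ᵥ y) := by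
  refine ⟨∑ i, ∑ j, |M i j|,
    Finset.sum_nonneg fun _ _ => Finset.sum_nonneg fun _ _ => abs_nonneg _, fun y => ?_⟩
  have hyy : 0 ≤ y ⬝ᵥ y := dp_self_nonneg y
  have habs : ∀ i, |y i| ≤ Real.sqrt (y ⬝ᵥ y) := by
    intro i
    rw [← Real.sqrt_sq_eq_abs]
    apply Real.sqrt_le_sqrt
    have := Finset.single_le_sum (f := fun k => y k * y k)
      (fun k _ => mul_self_nonneg _) (Finset.mem_univ i)
    simpa [sq, dotProduct] using this
  have key : ∀ i j, y i * (M i j * y j) ≤ |M i j| * (y ⬝ᵥ y) := by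
    intro i j
    calc y i * (M i j * y j) ≤ |y i * (M i j * y j)| := le_abs_self _
      _ = |M i j| * (|y i| * |y j|) := by rw [abs_mul, abs_mul]; ring
      _ ≤ |M i j| * (Real.sqrt (y ⬝ᵥ y) * Real.sqrt (y ⬝ᵥ y)) := by
          apply mul_le_mul_of_nonneg_left _ (abs_nonneg _)
          exact mul_le_mul (habs i) (habs j) (abs_nonneg _) (Real.sqrt_nonneg _)
      _ = |M i j| * (y ⬝ᵥ y) := by rw [Real.mul_self_sqrt hyy]
  calc y ⬝ᵥ M.mulVec y = ∑ i, ∑ j, y i * (M i j * y j) := by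
        simp [dotProduct, Matrix.mulVec, Finset.mul_sum]
    _ ≤ ∑ i, ∑ j, |M i j| * (y ⬝ᵥ y) :=
        Finset.sum_le_sum fun i _ => Finset.sum_le_sum fun j _ => key i j
    _ = (∑ i, ∑ j, |M i j|) * (y ⬝ᵥ y) := by simp [Finset.sum_mul]

lemma quad_lower {n : ℕ} {M : Matrix (Fin n) (Fin n) ℝ} (hM : M.PosDef) :
    ∃ m : ℝ, 0 < m ∧ ∀ x : Fin n → ℝ, m * (x ⬝ᵥ x) ≤ x ⬝ᵥ M.mulVec x := by
  rcases Nat.eq_zero_or_pos n with hn | hn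
  · subst hn
    exact ⟨1, one_pos, fun x => by
      have hx : x = 0 := Subsingleton.elim _ _
      simp [hx]⟩
  haveI : NeZero n := ⟨hn.ne'⟩
  set E := EuclideanSpace ℝ (Fin n) with hE
  let f : E → ℝ := fun x => (fun i => x i) ⬝ᵥ M.mulVec (fun i => x i)
  have hcont : Continuous f := by
    have : f = fun x : E => ∑ i, x i * ∑ j, M i j * x j := by
      funext x; simp [f, dotProduct, Matrix.mulVec]
    rw [this]
    exact continuous_finset_sum _ fun i _ =>
      ((EuclideanSpace.proj i).continuous).mul
        (continuous_finset_sum _ fun j _ =>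
          (continuous_const.mul (EuclideanSpace.proj j).continuous))
  have hsne : (Metric.sphere (0 : E) 1).Nonempty := by
    refine ⟨EuclideanSpace.single 0 1, ?_⟩
    rw [mem_sphere_zero_iff_norm, EuclideanSpace.norm_single]
    norm_num
  obtain ⟨x0, hx0mem, hx0min⟩ :=
    (isCompact_sphere (0 : E) 1).exists_isMinOn hsne hcont.continuousOn
  have hx0norm : ‖x0‖ = 1 := mem_sphere_zero_iff_norm.mp hx0mem
  have hx0ne : x0 ≠ 0 := by
    intro h; rw [h, norm_zero] at hx0norm; exact one_ne_zero hx0norm.symm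
  have hfx0 : 0 < f x0 := by
    have hne : (fun i => x0 i : Fin n → ℝ) ≠ 0 := by
      intro h
      apply hx0ne
      ext i
      exact congrFun h i
    have := hM.dotProduct_mulVec_pos hne
    simpa using this
  refine ⟨f x0, hfx0, fun x => ?_⟩
  rcases eq_or_ne x 0 with rfl | hx
  · simp
  · set xE : E := WithLp.toLp 2 x with hxE
    have hxEne : xE ≠ 0 := by
      intro h; apply hx; ext i; exact congrFun (congrArg (fun y : E => (fun i => y i)) h) i
    have hnorm : 0 < ‖xE‖ := norm_pos_iff.mpr hxEne
    set c : ℝ := ‖xE‖⁻¹ with hc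
    have humem : c • xE ∈ Metric.sphere (0 : E) 1 := by
      rw [mem_sphere_zero_iff_norm]
      exact norm_smul_inv_norm hxEne
    have hmin := hx0min humem
    have hfscale : f (c • xE) = c * (c * f xE) := by
      have h1 : (fun i => (c • xE) i : Fin n → ℝ) = c • (fun i => xE i) := rfl
      simp only [f, h1, smul_dotProduct, Matrix.mulVec_smul, dotProduct_smul, smul_eq_mul]
    have hs : (0:ℝ) < ‖xE‖ * ‖xE‖ := mul_pos hnorm hnorm
    have hfx : f x0 * (‖xE‖ * ‖xE‖) ≤ f xE := by
      have : f x0 ≤ c * (c * f xE) := by rw [← hfscale]; exact hmin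
      have h2 : c * (c * f xE) = f xE / (‖xE‖ * ‖xE‖) := by
        rw [hc, div_eq_mul_inv, mul_inv]; ring
      rw [h2, le_div_iff₀ hs] at this
      exact this
    have hnormsq : ‖xE‖ * ‖xE‖ = x ⬝ᵥ x := by
      rw [← Real.mul_self_sqrt (dp_self_nonneg x)]
      congr 1 <;>
      · rw [EuclideanSpace.norm_eq]
        congr 1
        simp [dotProduct, sq, hxE]
    calc f x0 * (x ⬝ᵥ x) = f x0 * (‖xE‖ * ‖xE‖) := by rw [hnormsq]
      _ ≤ f xE := hfx
      _ = x ⬝ᵥ M.mulVec x := rfl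

/-- the singular values `σ̲_j` of the matrix `A` (Euclidean norms) are bounded
by `sqrt(λmax(M_S)/λmin(M_R))` times the singular values `σ_j` of the operator `T`
(Hilbert space norms induced by the inner product matrices `M_S`, `M_R`). -/
theorem matrix_singular_values_le_operator_singular_values
    {nS nR : ℕ} (A : Matrix (Fin nR) (Fin nS) ℝ)
    (MS : Matrix (Fin nS) (Fin nS) ℝ) (MR : Matrix (Fin nR) (Fin nR) ℝ)
    (hMS : MS.PosDef) (hMR : MR.PosDef)
    (lamMaxS lamMinR : ℝ) (hlamMinR : 0 < lamMinR)
    (hmaxS : ∀ x : Fin nS → ℝ, x ⬝ᵥ MS.mulVec x ≤ lamMaxS * (x ⬝ᵥ x))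
    (hminR : ∀ y : Fin nR → ℝ, lamMinR * (y ⬝ᵥ y) ≤ y ⬝ᵥ MR.mulVec y) :
    ∀ j : ℕ, j < A.rank →
      minimaxSV (fun y => Real.sqrt (y ⬝ᵥ y)) (fun x => Real.sqrt (x ⬝ᵥ x)) A j
        ≤ Real.sqrt (lamMaxS / lamMinR) * minimaxSV (matNorm MR) (matNorm MS) A j := by
  intro j hj
  have hrankpos : 0 < A.rank := (Nat.zero_le j).trans_lt hj
  have hnS : 0 < nS := lt_of_lt_of_le hrankpos (Matrix.rank_le_width A)
  haveI : NeZero nS := ⟨hnS.ne'⟩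
  -- positivity of lamMaxS
  have hposMS : ∀ x : Fin nS → ℝ, x ≠ 0 → 0 < x ⬝ᵥ MS.mulVec x := by
    intro x hx
    have := hMS.dotProduct_mulVec_pos hx
    simpa using this
  have hposMR : ∀ y : Fin nR → ℝ, y ≠ 0 → 0 < y ⬝ᵥ MR.mulVec y := by
    intro y hy
    have := hMR.dotProduct_mulVec_pos hy
    simpa using this
  have hlamMaxS : 0 < lamMaxS := by
    have hx : (Pi.single (0 : Fin nS) (1:ℝ) : Fin nS → ℝ) ≠ 0 := by
      intro h
      have := congrFun h 0
      simp at this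
    have h1 := hposMS _ hx
    have h2 := hmaxS (Pi.single (0 : Fin nS) (1:ℝ) : Fin nS → ℝ)
    have h3 := dp_self_nonneg (Pi.single (0 : Fin nS) (1:ℝ) : Fin nS → ℝ)
    nlinarith
  obtain ⟨K1, hK1, hK1le⟩ := quad_upper MR
  obtain ⟨K2, hK2, hK2le'⟩ := quad_upper (Aᵀ * A)
  have hK2le : ∀ x : Fin nS → ℝ, (A.mulVec x) ⬝ᵥ (A.mulVec x) ≤ K2 * (x ⬝ᵥ x) := by
    intro x
    have h := hK2le' x
    rwa [← Matrix.mulVec_mulVec, Matrix.dotProduct_mulVec, Matrix.vecMul_transpose] at h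
  obtain ⟨mS, hmS, hmSle⟩ := quad_lower hMS
  set c := Real.sqrt (lamMaxS / lamMinR) with hc
  set C := Real.sqrt (K1 * K2) / Real.sqrt mS with hC
  -- pointwise bound for the operator ratio
  have hptC : ∀ x : Fin nS → ℝ, x ≠ 0 →
      matNorm MR (A.mulVec x) / matNorm MS x ≤ C := by
    intro x hx
    have hs : 0 < x ⬝ᵥ x := dp_self_pos hx
    have hQ : 0 < x ⬝ᵥ MS.mulVec x := hposMS x hx
    have hnum : matNorm MR (A.mulVec x) ≤ Real.sqrt (K1 * K2 * (x ⬝ᵥ x)) := by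
      apply Real.sqrt_le_sqrt
      calc (A.mulVec x) ⬝ᵥ MR.mulVec (A.mulVec x) ≤ K1 * ((A.mulVec x) ⬝ᵥ (A.mulVec x)) :=
            hK1le _
        _ ≤ K1 * (K2 * (x ⬝ᵥ x)) := mul_le_mul_of_nonneg_left (hK2le x) hK1
        _ = K1 * K2 * (x ⬝ᵥ x) := by ring
    have hden : Real.sqrt (mS * (x ⬝ᵥ x)) ≤ matNorm MS x := Real.sqrt_le_sqrt (hmSle x)
    have hdenpos : 0 < Real.sqrt (mS * (x ⬝ᵥ x)) :=
      Real.sqrt_pos.mpr (mul_pos hmS hs)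
    calc matNorm MR (A.mulVec x) / matNorm MS x
        ≤ Real.sqrt (K1 * K2 * (x ⬝ᵥ x)) / Real.sqrt (mS * (x ⬝ᵥ x)) :=
          div_le_div₀ (Real.sqrt_nonneg _) hnum hdenpos hden
      _ = C := by
          rw [Real.sqrt_mul (mul_nonneg hK1 hK2), Real.sqrt_mul hmS.le, hC,
            mul_div_mul_right _ _ (Real.sqrt_pos.mpr hs).ne']
  -- pointwise comparison of the two ratios
  have hpt : ∀ x : Fin nS → ℝ, x ≠ 0 →
      Real.sqrt ((A.mulVec x) ⬝ᵥ (A.mulVec x)) / Real.sqrt (x ⬝ᵥ x)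
        ≤ c * (matNorm MR (A.mulVec x) / matNorm MS x) := by
    intro x hx
    have hs : 0 < x ⬝ᵥ x := dp_self_pos hx
    have hQ : 0 < x ⬝ᵥ MS.mulVec x := hposMS x hx
    have ht : 0 ≤ (A.mulVec x) ⬝ᵥ (A.mulVec x) := dp_self_nonneg _
    have hP : lamMinR * ((A.mulVec x) ⬝ᵥ (A.mulVec x)) ≤ (A.mulVec x) ⬝ᵥ MR.mulVec (A.mulVec x) :=
      hminR _
    have hP0 : 0 ≤ (A.mulVec x) ⬝ᵥ MR.mulVec (A.mulVec x) :=
      le_trans (mul_nonneg hlamMinR.le ht) hP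
    have hQle : x ⬝ᵥ MS.mulVec x ≤ lamMaxS * (x ⬝ᵥ x) := hmaxS x
    set t := (A.mulVec x) ⬝ᵥ (A.mulVec x)
    set s := x ⬝ᵥ x
    set P := (A.mulVec x) ⬝ᵥ MR.mulVec (A.mulVec x)
    set Q := x ⬝ᵥ MS.mulVec x
    have key : t / s ≤ (lamMaxS / lamMinR) * (P / Q) := by
      have h1 : (lamMaxS / lamMinR) * (P / Q) = lamMaxS * P / (lamMinR * Q) := by
        field_simp
      rw [h1, div_le_div_iff₀ hs (mul_pos hlamMinR hQ)]
      nlinarith [mul_le_mul_of_nonneg_left hQle (mul_nonneg ht hlamMinR.le),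
        mul_le_mul_of_nonneg_left hP (mul_nonneg hlamMaxS.le hs.le)]
    calc Real.sqrt t / Real.sqrt s = Real.sqrt (t / s) := (Real.sqrt_div ht s).symm
      _ ≤ Real.sqrt ((lamMaxS / lamMinR) * (P / Q)) := Real.sqrt_le_sqrt key
      _ = c * (matNorm MR (A.mulVec x) / matNorm MS x) := by
          rw [Real.sqrt_mul (div_nonneg hlamMaxS.le hlamMinR.le), Real.sqrt_div hP0]
          rfl
  have hc0 : 0 ≤ c := Real.sqrt_nonneg _
  -- index type nonempty
  have hjn : j + 1 ≤ nS := Nat.succ_le_of_lt (lt_of_lt_of_le hj (Matrix.rank_le_width A))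
  haveI hWne : Nonempty {W : Submodule ℝ (Fin nS → ℝ) // Module.finrank ℝ W = j + 1} := by
    have hli : LinearIndependent ℝ (fun i : Fin (j+1) =>
        (Pi.single (Fin.castLE hjn i) 1 : Fin nS → ℝ)) := by
      have hb := (Pi.basisFun ℝ (Fin nS)).linearIndependent
      have := hb.comp (Fin.castLE hjn) (Fin.castLE_injective _)
      simpa [Function.comp_def, Pi.basisFun_apply] using this
    exact ⟨⟨Submodule.span ℝ (Set.range (fun i : Fin (j+1) =>
      (Pi.single (Fin.castLE hjn i) 1 : Fin nS → ℝ))),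
      by rw [finrank_span_eq_card hli, Fintype.card_fin]⟩⟩
  -- each fiber nonempty
  haveI hfib : ∀ W : {W : Submodule ℝ (Fin nS → ℝ) // Module.finrank ℝ W = j + 1},
      Nonempty {x : Fin nS → ℝ // x ∈ W.1 ∧ x ≠ 0} := by
    intro W
    have hbot : W.1 ≠ ⊥ := by
      intro h
      have := W.2
      rw [h, finrank_bot] at this
      exact Nat.succ_ne_zero j this.symm
    obtain ⟨x, hxm, hx0⟩ := Submodule.exists_mem_ne_zero_of_ne_bot hbot
    exact ⟨⟨x, hxm, hx0⟩⟩
  -- notation for the two families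
  set G : {W : Submodule ℝ (Fin nS → ℝ) // Module.finrank ℝ W = j + 1} → ℝ :=
    fun W => ⨅ x : {x : Fin nS → ℝ // x ∈ W.1 ∧ x ≠ 0},
      matNorm MR (A.mulVec x.1) / matNorm MS x.1 with hG
  have hGbdd : ∀ W : {W : Submodule ℝ (Fin nS → ℝ) // Module.finrank ℝ W = j + 1}, BddBelow (Set.range fun x : {x : Fin nS → ℝ // x ∈ W.1 ∧ x ≠ 0} =>
      matNorm MR (A.mulVec x.1) / matNorm MS x.1) := by
    intro W
    refine ⟨0, ?_⟩
    rintro y ⟨x, rfl⟩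
    exact div_nonneg (Real.sqrt_nonneg _) (Real.sqrt_nonneg _)
  have hGle : ∀ W : {W : Submodule ℝ (Fin nS → ℝ) // Module.finrank ℝ W = j + 1}, G W ≤ C := by
    intro W
    obtain ⟨x⟩ := hfib W
    exact le_trans (ciInf_le (hGbdd W) x) (hptC x.1 x.2.2)
  have hstep : ∀ W : {W : Submodule ℝ (Fin nS → ℝ) // Module.finrank ℝ W = j + 1}, (⨅ x : {x : Fin nS → ℝ // x ∈ W.1 ∧ x ≠ 0},
      Real.sqrt ((A.mulVec x.1) ⬝ᵥ (A.mulVec x.1)) / Real.sqrt (x.1 ⬝ᵥ x.1)) ≤ c * G W := by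
    intro W
    rw [hG, Real.mul_iInf_of_nonneg hc0]
    apply ciInf_mono
    · refine ⟨0, ?_⟩
      rintro y ⟨x, rfl⟩
      exact div_nonneg (Real.sqrt_nonneg _) (Real.sqrt_nonneg _)
    · exact fun x => hpt x.1 x.2.2
  have hbddtop : BddAbove (Set.range fun W : {W : Submodule ℝ (Fin nS → ℝ) //
      Module.finrank ℝ W = j + 1} => c * G W) := by
    refine ⟨c * C, ?_⟩
    rintro y ⟨W, rfl⟩
    exact mul_le_mul_of_nonneg_left (hGle W) hc0
  simp only [minimaxSV]
  rw [Real.mul_iSup_of_nonneg hc0]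
  exact ciSup_mono hbddtop hstep
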